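/- For every p ≥ 1 and every lsc, proper, symmetric, convex f_p: ℝ^p → ℝ∪{+∞}, there exists a symmetric, lower semicontinuous, proper, convex f: L2(0,1) → ℝ∪{+∞} that is an L2 embedding of f_p, i.e., f_p(x) = p·f(ι(x)) for every x ∈ ℝ^p and every embedding ι: ℝ^p → L2(0,1) of the form ι(x) = Σ_{j=1}^p x_j·1_{I_j}, where I₁,…,I_p is a Borel partition of (0,1) with each part of Lebesgue measure 1/p. -/

import Mathlib

open MeasureTheory ProbabilityTheory Filter
open scoped ENNReal NNReal

noncomputable section

/-- Lebesgue measure restricted to the interval `(0,1)`. -/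
def unitMeasure : Measure ℝ := volume.restrict (Set.Ioo (0:ℝ) 1)

/-- The Hilbert space `L2(0,1)`. -/
abbrev L2 : Type := Lp ℝ 2 unitMeasure

/-- The law (pushforward of Lebesgue measure on `(0,1)`) of `X ∈ L2(0,1)`. -/
def lawOf (X : L2) : Measure ℝ := Measure.map (fun t => X t) unitMeasure

/-- The joint law of a pair of elements of `L2(0,1)`. -/
def lawOf2 (X G : L2) : Measure (ℝ × ℝ) :=
  Measure.map (fun t => (X t, G t)) unitMeasure

/-- Membership in the Wasserstein space `P₂(ℝ)`. -/
def MemP2 (μ : Measure ℝ) : Prop :=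
  IsProbabilityMeasure μ ∧ Integrable (fun x : ℝ => x ^ 2) μ

/-- Membership in the Wasserstein space `P₂(ℝ²)`. -/
def MemP2Prod (π : Measure (ℝ × ℝ)) : Prop :=
  IsProbabilityMeasure π ∧ Integrable (fun q : ℝ × ℝ => q.1 ^ 2 + q.2 ^ 2) π

/-- `π` is a coupling of `μ` and `ν`. -/
def IsCoupling (π : Measure (ℝ × ℝ)) (μ ν : Measure ℝ) : Prop :=
  π.fst = μ ∧ π.snd = ν

/-- Squared Wasserstein-2 distance on `P₂(ℝ)`. -/
def W2sq (μ ν : Measure ℝ) : ℝ :=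
  sInf {r : ℝ | ∃ π : Measure (ℝ × ℝ), IsCoupling π μ ν ∧ r = ∫ q, (q.1 - q.2) ^ 2 ∂π}

/-- The Wasserstein-2 distance on `P₂(ℝ)`. -/
def W2 (μ ν : Measure ℝ) : ℝ := Real.sqrt (W2sq μ ν)

/-- Squared Wasserstein-2 distance on `P₂(ℝ²)` (Euclidean cost). -/
def W2sqProd (μ ν : Measure (ℝ × ℝ)) : ℝ :=
  sInf {r : ℝ | ∃ π : Measure ((ℝ × ℝ) × (ℝ × ℝ)), π.fst = μ ∧ π.snd = ν ∧
    r = ∫ q, ((q.1.1 - q.2.1) ^ 2 + (q.1.2 - q.2.2) ^ 2) ∂π}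

/-- The Wasserstein-2 distance on `P₂(ℝ²)`. -/
def W2Prod (μ ν : Measure (ℝ × ℝ)) : ℝ := Real.sqrt (W2sqProd μ ν)

/-- Convexity of an `ℝ ∪ {+∞}`-valued function. -/
def ConvexE {E : Type*} [AddCommMonoid E] [Module ℝ E] (f : E → EReal) : Prop :=
  ∀ x y : E, ∀ a b : ℝ, 0 ≤ a → 0 ≤ b → a + b = 1 →
    f (a • x + b • y) ≤ (a : EReal) * f x + (b : EReal) * f y

/-- Objective of the scalar proximal problem. -/
def obj1 (ρ : ℝ → EReal) (y x : ℝ) : EReal :=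
  (((1:ℝ)/2 * (y - x) ^ 2 : ℝ) : EReal) + ρ x

/-- `x` is the unique minimizer of `z ↦ ½(y−z)² + ρ(z)`. -/
def IsProx1 (ρ : ℝ → EReal) (y x : ℝ) : Prop :=
  (∀ z : ℝ, obj1 ρ y x ≤ obj1 ρ y z) ∧ ∀ z : ℝ, obj1 ρ y z ≤ obj1 ρ y x → z = x

/-- Objective of the proximal problem on `ℝ^p` (Euclidean norm). -/
def objPi {p : ℕ} (f : (Fin p → ℝ) → EReal) (y x : Fin p → ℝ) : EReal :=
  (((1:ℝ)/2 * ∑ i, (y i - x i) ^ 2 : ℝ) : EReal) + f x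

/-- `x` is the unique minimizer of `z ↦ ½‖y−z‖² + f(z)` on `ℝ^p`. -/
def IsProxPi {p : ℕ} (f : (Fin p → ℝ) → EReal) (y x : Fin p → ℝ) : Prop :=
  (∀ z, objPi f y x ≤ objPi f y z) ∧ ∀ z, objPi f y z ≤ objPi f y x → z = x

/-- Objective of the proximal problem on `L2(0,1)`. -/
def objL2 (f : L2 → EReal) (Y X : L2) : EReal :=
  (((1:ℝ)/2 * ∫ t, (Y t - X t) ^ 2 ∂unitMeasure : ℝ) : EReal) + f X

/-- `P` is the unique minimizer of `X ↦ ½E[(Y−X)²] + f(X)` on `L2(0,1)`. -/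
def IsProxL2 (f : L2 → EReal) (Y P : L2) : Prop :=
  (∀ X, objL2 f Y P ≤ objL2 f Y X) ∧ ∀ X, objL2 f Y X ≤ objL2 f Y P → X = P

/-- Permutation-symmetry of a function on `ℝ^p`. -/
def SymmPi {p : ℕ} (f : (Fin p → ℝ) → EReal) : Prop :=
  ∀ (σ : Equiv.Perm (Fin p)) (x : Fin p → ℝ), f (x ∘ σ) = f x

/-- Symmetry (law-invariance) of a function on `L2(0,1)`. -/
def SymmL2 (f : L2 → EReal) : Prop :=
  ∀ X X' : L2, lawOf X = lawOf X' → f X = f X'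

/-- `G` belongs to the subdifferential of `f` at `X`. -/
def InSubdiff (f : L2 → EReal) (X G : L2) : Prop :=
  ∀ X' : L2, f X + ((∫ t, G t * (X' t - X t) ∂unitMeasure : ℝ) : EReal) ≤ f X'

/-- Joint cyclic monotonicity of a set of measures on `ℝ²`. -/
def JointCycMono (K : Set (Measure (ℝ × ℝ))) : Prop :=
  ∀ (n : ℕ) (π : Fin n → Measure (ℝ × ℝ)), (∀ j, π j ∈ K) →
    ∀ X G : Fin n → L2, (∀ j, lawOf2 (X j) (G j) = π j) →
      ∀ σ : Equiv.Perm (Fin n),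
        ∑ j, ∫ t, X j t * G (σ j) t ∂unitMeasure ≤
          ∑ j, ∫ t, X j t * G j t ∂unitMeasure

/-- The standard Gaussian measure `N(0, I_p)` on `ℝ^p`. -/
def stdGaussPi (p : ℕ) : Measure (Fin p → ℝ) := Measure.pi fun _ => gaussianReal 0 1

/-- Convolution `μ * N(0, τ²)`. -/
def gaussConv (μ : Measure ℝ) (τ : ℝ) : Measure ℝ :=
  Measure.map (fun q : ℝ × ℝ => q.1 + q.2) (μ.prod (gaussianReal 0 (Real.toNNReal (τ ^ 2))))

/-- Empirical distribution of the coordinates of a vector in `ℝ^p`. -/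
def empDist {p : ℕ} (θ : Fin p → ℝ) : Measure ℝ :=
  ((p : ℝ≥0∞))⁻¹ • ∑ j : Fin p, Measure.dirac (θ j)

/-- Empirical joint distribution of the coordinate pairs of two vectors in `ℝ^p`. -/
def empPair {p : ℕ} (a b : Fin p → ℝ) : Measure (ℝ × ℝ) :=
  ((p : ℝ≥0∞))⁻¹ • ∑ j : Fin p, Measure.dirac (a j, b j)

/-- Non-decreasing and 1-Lipschitz (the class `PR₁`). -/
def IsPR1 (η : ℝ → ℝ) : Prop :=
  Monotone η ∧ ∀ y y' : ℝ, |η y - η y'| ≤ |y - y'|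


noncomputable section

/-- A Borel partition of `(0,1)` into `p` parts, each of Lebesgue measure `1/p`. -/
def IsUnifPartition (p : ℕ) (I : Fin p → Set ℝ) : Prop :=
  (∀ j, MeasurableSet (I j)) ∧ Pairwise (Function.onFun Disjoint I) ∧
    (⋃ j, I j) = Set.Ioo (0:ℝ) 1 ∧ ∀ j, volume (I j) = 1 / (p : ℝ≥0∞)

/-- `X ∈ L2(0,1)` represents the embedding `ι(x) = Σ_j x_j · 1_{I_j}` of `x ∈ ℝ^p`. -/
def RepresentsEmbed {p : ℕ} (I : Fin p → Set ℝ) (x : Fin p → ℝ) (X : L2) : Prop :=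
  (fun t => X t) =ᵐ[unitMeasure]
    fun t => ∑ j, Set.indicator (I j) (fun _ => x j) t

/-- `f : L2(0,1) → ℝ ∪ {+∞}` is an `L2` embedding of `fp : ℝ^p → ℝ ∪ {+∞}`,
i.e. `fp x = p · f(ι x)` for every `x` and every embedding `ι` of the above form. -/
def IsL2Embedding {p : ℕ} (fp : (Fin p → ℝ) → EReal) (f : L2 → EReal) : Prop :=
  ∀ (I : Fin p → Set ℝ), IsUnifPartition p I →
    ∀ (x : Fin p → ℝ) (X : L2), RepresentsEmbed I x X →
      fp x = (p : EReal) * f X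

end


noncomputable section AuxProof
open Finset

open Finset in
lemma abel_identity (W V : ℕ → ℝ) (n : ℕ) :
    ∑ k ∈ range (n+1), W k * V k =
      V 0 * ∑ k ∈ range (n+1), W k +
        ∑ i ∈ range n, (V (i+1) - V i) * ∑ k ∈ Finset.Ico (i+1) (n+1), W k := by
  induction n with
  | zero => simp; ring
  | succ m ih =>
    have h1 : ∑ i ∈ range (m+1), (V (i+1) - V i) * ∑ k ∈ Finset.Ico (i+1) (m+2), W k
        = ∑ i ∈ range (m+1), ((V (i+1) - V i) * ∑ k ∈ Finset.Ico (i+1) (m+1), W k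
            + (V (i+1) - V i) * W (m+1)) := by
      refine Finset.sum_congr rfl fun i hi => ?_
      have hi' : i + 1 ≤ m + 1 := Nat.succ_le_succ (Nat.lt_succ_iff.mp (mem_range.mp hi))
      rw [Finset.sum_Ico_succ_top hi', mul_add]
    have h2 : ∑ i ∈ range (m+1), (V (i+1) - V i) * W (m+1)
        = (V (m+1) - V 0) * W (m+1) := by
      rw [← Finset.sum_mul, Finset.sum_range_sub]
    have h3 : ∑ i ∈ range (m+1), (V (i+1) - V i) * ∑ k ∈ Finset.Ico (i+1) (m+1), W k
        = ∑ i ∈ range m, (V (i+1) - V i) * ∑ k ∈ Finset.Ico (i+1) (m+1), W k := by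
      rw [Finset.sum_range_succ]
      simp
    have e1 : ∑ k ∈ Finset.range (m+1+1), W k = ∑ x ∈ Finset.range m, W x + W m + W (m+1) := by
      rw [Finset.sum_range_succ, Finset.sum_range_succ]
    rw [Finset.sum_range_succ (fun k => W k * V k), ih,
      Finset.sum_range_succ (fun k => W k), h1, Finset.sum_add_distrib, h2, h3, e1]
    ring

open Finset in
lemma discrete_cvar (W : ℕ → ℝ) (p m : ℕ) (hm : 1 ≤ m) (hmp : m ≤ p)
    (hW : ∀ a b : ℕ, a ≤ b → b < p → W a ≤ W b) :
    IsLeast (Set.range fun lam : ℝ =>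
        lam * (m / p) + (1/p) * ∑ k ∈ range p, max (W k - lam) 0)
      ((1/p) * ∑ k ∈ Finset.Ico (p - m) p, W k) := by
  have hp : 0 < p := lt_of_lt_of_le hm hmp
  have hpR : (0:ℝ) < p := by exact_mod_cast hp
  have hpmlt : p - m < p := Nat.sub_lt hp hm
  have hcard : ((Finset.Ico (p - m) p).card : ℝ) = m := by
    rw [Nat.card_Ico, Nat.sub_sub_self hmp]
  set lam0 := W (p - m) with hlam0
  set T := ∑ k ∈ Finset.Ico (p - m) p, W k with hT
  constructor
  · refine ⟨lam0, ?_⟩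
    show lam0 * ((m:ℝ) / p) + (1/p) * ∑ k ∈ range p, max (W k - lam0) 0 = (1/p) * T
    have hsplit : ∑ k ∈ range p, max (W k - lam0) 0
        = ∑ k ∈ Finset.Ico (p - m) p, (W k - lam0) := by
      rw [range_eq_Ico, ← Finset.sum_Ico_consecutive _ (Nat.zero_le (p - m)) (le_of_lt hpmlt)]
      have hz : ∑ k ∈ Finset.Ico 0 (p - m), max (W k - lam0) 0 = 0 := by
        refine Finset.sum_eq_zero fun k hk => ?_
        have hk' : k < p - m := (Finset.mem_Ico.mp hk).2
        have : W k ≤ lam0 := hW k (p - m) (le_of_lt hk') hpmlt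
        simp [max_eq_right, sub_nonpos.mpr this]
      have hz2 : ∑ k ∈ Finset.Ico (p - m) p, max (W k - lam0) 0
          = ∑ k ∈ Finset.Ico (p - m) p, (W k - lam0) := by
        refine Finset.sum_congr rfl fun k hk => ?_
        have : lam0 ≤ W k := hW (p - m) k (Finset.mem_Ico.mp hk).1 (Finset.mem_Ico.mp hk).2
        simp [max_eq_left, sub_nonneg.mpr this]
      rw [hz, hz2, zero_add]
    rw [hsplit, Finset.sum_sub_distrib, Finset.sum_const, nsmul_eq_mul, hcard]
    field_simp
    ring
  · rintro r ⟨lam, rfl⟩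
    have hsub : Finset.Ico (p - m) p ⊆ range p := by
      rw [range_eq_Ico]
      exact Finset.Ico_subset_Ico (Nat.zero_le _) le_rfl
    have h1 : ∑ k ∈ Finset.Ico (p - m) p, (W k - lam) ≤ ∑ k ∈ range p, max (W k - lam) 0 := by
      calc ∑ k ∈ Finset.Ico (p - m) p, (W k - lam)
          ≤ ∑ k ∈ Finset.Ico (p - m) p, max (W k - lam) 0 :=
            Finset.sum_le_sum fun k _ => le_max_left _ _
        _ ≤ ∑ k ∈ range p, max (W k - lam) 0 :=
            Finset.sum_le_sum_of_subset_of_nonneg hsub fun k _ _ => le_max_right _ _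
    have h2 : ∑ k ∈ Finset.Ico (p - m) p, (W k - lam) = T - m * lam := by
      rw [Finset.sum_sub_distrib, Finset.sum_const, nsmul_eq_mul, hcard]
    have h3 : (1/p : ℝ) * (T - m * lam) ≤ (1/p) * ∑ k ∈ range p, max (W k - lam) 0 := by
      apply mul_le_mul_of_nonneg_left _ (by positivity)
      rw [← h2]; exact h1
    have h4 : lam * (m / p) + (1/p) * (T - m * lam) = (1/p) * T := by
      field_simp; ring
    linarith


/-- The coordinates of `x` sorted increasingly, as a function `ℕ → ℝ` (zero beyond `p`). -/
noncomputable def sortedSeq {p : ℕ} (x : Fin p → ℝ) : ℕ → ℝ :=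
  fun k => if h : k < p then x (Tuple.sort x ⟨k, h⟩) else 0

lemma sortedSeq_mono {p : ℕ} (x : Fin p → ℝ) :
    ∀ a b : ℕ, a ≤ b → b < p → sortedSeq x a ≤ sortedSeq x b := by
  intro a b hab hbp
  have hap : a < p := lt_of_le_of_lt hab hbp
  simp only [sortedSeq, dif_pos hap, dif_pos hbp]
  exact Tuple.monotone_sort x (show (⟨a, hap⟩ : Fin p) ≤ ⟨b, hbp⟩ from hab)

lemma sum_sortedSeq_comp {p : ℕ} (x : Fin p → ℝ) (g : ℝ → ℝ) :
    ∑ k ∈ range p, g (sortedSeq x k) = ∑ j : Fin p, g (x j) := by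
  rw [← Fin.sum_univ_eq_sum_range (fun k => g (sortedSeq x k)) p]
  have h1 : ∀ k : Fin p, g (sortedSeq x k) = (fun j => g (x j)) (Tuple.sort x k) := by
    intro k
    simp [sortedSeq, Fin.is_lt k]
  rw [Finset.sum_congr rfl fun k _ => h1 k]
  exact Equiv.sum_comp (Tuple.sort x) (fun j => g (x j))

lemma inner_le_sorted {p : ℕ} (x y : Fin p → ℝ) :
    ∑ j : Fin p, x j * y j ≤ ∑ k ∈ range p, sortedSeq x k * sortedSeq y k := by
  set w : Fin p → ℝ := x ∘ Tuple.sort x with hw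
  set v : Fin p → ℝ := y ∘ Tuple.sort y with hv
  have hRHS : ∑ k ∈ range p, sortedSeq x k * sortedSeq y k = ∑ k : Fin p, w k * v k := by
    rw [← Fin.sum_univ_eq_sum_range (fun k => sortedSeq x k * sortedSeq y k) p]
    refine Finset.sum_congr rfl fun k _ => ?_
    simp [sortedSeq, Fin.is_lt k, hw, hv]
  have hmono : Monovary w v := by
    intro i j hvij
    by_contra hcon
    push_neg at hcon
    have hji : j ≤ i := by
      by_contra hij
      push_neg at hij
      exact absurd (Tuple.monotone_sort x (le_of_lt hij)) (not_le.mpr hcon)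
    exact absurd (Tuple.monotone_sort y hji) (not_le.mpr hvij)
  have key := hmono.sum_smul_comp_perm_le_sum_smul
    (σ := (Tuple.sort x).trans (Tuple.sort y).symm)
  have hLHS : ∑ j : Fin p, x j * y j
      = ∑ k : Fin p, w k • v (((Tuple.sort x).trans (Tuple.sort y).symm) k) := by
    rw [← Equiv.sum_comp (Tuple.sort x) (fun j => x j * y j)]
    refine Finset.sum_congr rfl fun k _ => ?_
    simp [hw, hv, smul_eq_mul]
  rw [hLHS, hRHS]
  simpa [smul_eq_mul] using key

lemma sorted_eq_perm {p : ℕ} (x y : Fin p → ℝ) :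
    ∃ ρ : Equiv.Perm (Fin p),
      ∑ k ∈ range p, sortedSeq x k * sortedSeq y k = ∑ j : Fin p, x j * y (ρ j) := by
  refine ⟨(Tuple.sort x).symm.trans (Tuple.sort y), ?_⟩
  have hRHS : ∑ k ∈ range p, sortedSeq x k * sortedSeq y k
      = ∑ k : Fin p, x (Tuple.sort x k) * y (Tuple.sort y k) := by
    rw [← Fin.sum_univ_eq_sum_range (fun k => sortedSeq x k * sortedSeq y k) p]
    refine Finset.sum_congr rfl fun k _ => ?_
    simp [sortedSeq, Fin.is_lt k]
  rw [hRHS, ← Equiv.sum_comp (Tuple.sort x)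
    (fun j => x j * y (((Tuple.sort x).symm.trans (Tuple.sort y)) j))]
  refine Finset.sum_congr rfl fun k _ => ?_
  simp


instance : IsProbabilityMeasure unitMeasure :=
  ⟨by simp [unitMeasure, Real.volume_Ioo]⟩

lemma L2.int (X : L2) : Integrable (fun t => X t) unitMeasure :=
  (Lp.memLp X).integrable one_le_two

lemma L2.aem (X : L2) : AEMeasurable (fun t => X t) unitMeasure :=
  (Lp.aestronglyMeasurable X).aemeasurable

lemma L2.int_comp (X : L2) (g : ℝ → ℝ) (hg : Continuous g)
    (hb : ∀ u : ℝ, |g u| ≤ |u| + C) : Integrable (fun t => g (X t)) unitMeasure := by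
  refine Integrable.mono' ((L2.int X).abs.add (integrable_const C))
    (hg.comp_aestronglyMeasurable (Lp.aestronglyMeasurable X)) ?_
  filter_upwards with t
  simpa using hb (X t)

/-- CVaR-type objective. -/
def cvarObj (s : ℝ) (X : L2) (lam : ℝ) : ℝ :=
  lam * s + ∫ t, max (X t - lam) 0 ∂unitMeasure

/-- The "integral of the top `s`-fraction" functional, defined by the
Rockafellar inf-formula. -/
def cvar (s : ℝ) (X : L2) : ℝ := sInf (Set.range (cvarObj s X))

lemma cvar_int_max (X : L2) (lam : ℝ) :
    Integrable (fun t => max (X t - lam) 0) unitMeasure := by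
  refine L2.int_comp X (fun u => max (u - lam) 0)
    ((continuous_id.sub continuous_const).max continuous_const) (C := |lam|) ?_
  intro u
  show |max (u - lam) 0| ≤ |u| + |lam|
  rw [abs_of_nonneg (le_max_right _ _)]
  rcases le_or_gt (u - lam) 0 with h | h
  · simp [max_eq_right h]; positivity
  · rw [max_eq_left h.le]
    calc u - lam ≤ |u| + |lam| := by
          have := abs_sub_abs_le_abs_sub u lam
          have h2 := le_abs_self (u - lam)
          have := neg_abs_le lam
          linarith [le_abs_self u, neg_abs_le lam]

lemma integral_sub_const (X : L2) (lam : ℝ) :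
    ∫ t, (X t - lam) ∂unitMeasure = (∫ t, X t ∂unitMeasure) - lam := by
  rw [integral_sub (L2.int X) (integrable_const lam), integral_const]
  simp

lemma cvar_bddBelow (s : ℝ) (hs0 : 0 ≤ s) (hs1 : s ≤ 1) (X : L2) :
    BddBelow (Set.range (cvarObj s X)) := by
  refine ⟨min (∫ t, X t ∂unitMeasure) 0, ?_⟩
  rintro r ⟨lam, rfl⟩
  have hnn : 0 ≤ ∫ t, max (X t - lam) 0 ∂unitMeasure :=
    integral_nonneg fun t => le_max_right _ _
  have hge : ∫ t, (X t - lam) ∂unitMeasure ≤ ∫ t, max (X t - lam) 0 ∂unitMeasure :=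
    integral_mono ((L2.int X).sub (integrable_const lam)) (cvar_int_max X lam)
      fun t => le_max_left _ _
  rw [integral_sub_const] at hge
  rcases le_or_gt 0 lam with h | h
  · have : 0 ≤ lam * s := mul_nonneg h hs0
    calc min (∫ t, X t ∂unitMeasure) 0 ≤ 0 := min_le_right _ _
      _ ≤ cvarObj s X lam := by unfold cvarObj; linarith
  · have : 0 ≤ lam * (s - 1) := by nlinarith
    calc min (∫ t, X t ∂unitMeasure) 0 ≤ ∫ t, X t ∂unitMeasure := min_le_left _ _
      _ ≤ cvarObj s X lam := by unfold cvarObj; nlinarith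

lemma cvar_le (s : ℝ) (hs0 : 0 ≤ s) (hs1 : s ≤ 1) (X : L2) (lam : ℝ) :
    cvar s X ≤ cvarObj s X lam :=
  csInf_le (cvar_bddBelow s hs0 hs1 X) ⟨lam, rfl⟩

lemma le_cvar (s : ℝ) (X : L2) (b : ℝ) (h : ∀ lam, b ≤ cvarObj s X lam) :
    b ≤ cvar s X :=
  le_csInf ⟨cvarObj s X 0, ⟨0, rfl⟩⟩ (by rintro r ⟨lam, rfl⟩; exact h lam)

lemma cvar_law_inv (s : ℝ) (X X' : L2) (h : lawOf X = lawOf X') :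
    cvar s X = cvar s X' := by
  have key : ∀ (Y : L2) (lam : ℝ), ∫ t, max (Y t - lam) 0 ∂unitMeasure
      = ∫ u, max (u - lam) 0 ∂(lawOf Y) := by
    intro Y lam
    have hg : AEStronglyMeasurable (fun u : ℝ => max (u - lam) 0)
        (Measure.map (fun t => (Y t : ℝ)) unitMeasure) :=
      ((continuous_id.sub continuous_const).max continuous_const).aestronglyMeasurable
    rw [lawOf]
    exact (integral_map (L2.aem Y) hg).symm
  have hobj : cvarObj s X = cvarObj s X' := funext fun lam => by
    unfold cvarObj
    rw [key X lam, key X' lam, h]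
  unfold cvar
  rw [hobj]

lemma integral_law_inv (X X' : L2) (h : lawOf X = lawOf X') :
    ∫ t, X t ∂unitMeasure = ∫ t, X' t ∂unitMeasure := by
  have key : ∀ (Y : L2), ∫ t, Y t ∂unitMeasure = ∫ u, u ∂(lawOf Y) := by
    intro Y
    have hg : AEStronglyMeasurable (fun u : ℝ => u)
        (Measure.map (fun t => (Y t : ℝ)) unitMeasure) :=
      continuous_id.aestronglyMeasurable
    rw [lawOf]
    exact (integral_map (L2.aem Y) hg).symm
  rw [key, key, h]

lemma cvar_convex (s : ℝ) (hs0 : 0 ≤ s) (hs1 : s ≤ 1) (X Y : L2) (a b : ℝ)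
    (ha : 0 ≤ a) (hb : 0 ≤ b) (hab : a + b = 1) :
    cvar s (a • X + b • Y) ≤ a * cvar s X + b * cvar s Y := by
  set Z : L2 := a • X + b • Y with hZ
  have hcoe : (fun t => Z t) =ᵐ[unitMeasure] fun t => a * X t + b * Y t := by
    filter_upwards [Lp.coeFn_add (a • X) (b • Y), Lp.coeFn_smul a X, Lp.coeFn_smul b Y]
      with t h1 h2 h3
    simp only [hZ, h1, Pi.add_apply, h2, h3, Pi.smul_apply, smul_eq_mul]
  have key : ∀ lam mu : ℝ, cvarObj s Z (a * lam + b * mu)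
      ≤ a * cvarObj s X lam + b * cvarObj s Y mu := by
    intro lam mu
    have hpt : ∀ᵐ t ∂unitMeasure, max (Z t - (a * lam + b * mu)) 0
        ≤ a * max (X t - lam) 0 + b * max (Y t - mu) 0 := by
      filter_upwards [hcoe] with t ht
      rw [ht]
      have h1 : a * X t + b * Y t - (a * lam + b * mu)
          ≤ a * max (X t - lam) 0 + b * max (Y t - mu) 0 := by
        have := mul_le_mul_of_nonneg_left (le_max_left (X t - lam) 0) ha
        have := mul_le_mul_of_nonneg_left (le_max_left (Y t - mu) 0) hb
        nlinarith [le_max_left (X t - lam) 0, le_max_left (Y t - mu) 0]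
      have h2 : (0:ℝ) ≤ a * max (X t - lam) 0 + b * max (Y t - mu) 0 := by
        have := mul_nonneg ha (le_max_right (X t - lam) 0)
        have := mul_nonneg hb (le_max_right (Y t - mu) 0)
        linarith
      exact max_le h1 h2
    have hint : ∫ t, max (Z t - (a * lam + b * mu)) 0 ∂unitMeasure
        ≤ ∫ t, (a * max (X t - lam) 0 + b * max (Y t - mu) 0) ∂unitMeasure :=
      integral_mono_ae (cvar_int_max Z _)
        (((cvar_int_max X lam).const_mul a).add ((cvar_int_max Y mu).const_mul b)) hpt
    rw [integral_add ((cvar_int_max X lam).const_mul a) ((cvar_int_max Y mu).const_mul b),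
      integral_const_mul, integral_const_mul] at hint
    unfold cvarObj
    nlinarith
  refine le_of_forall_pos_le_add fun ε hε => ?_
  obtain ⟨rX, ⟨lam, rfl⟩, hlam⟩ := Real.lt_sInf_add_pos
    (Set.range_nonempty (cvarObj s X)) (half_pos hε)
  obtain ⟨rY, ⟨mu, rfl⟩, hmu⟩ := Real.lt_sInf_add_pos
    (Set.range_nonempty (cvarObj s Y)) (half_pos hε)
  have h1 : cvar s Z ≤ cvarObj s Z (a * lam + b * mu) := cvar_le s hs0 hs1 Z _
  have h2 := key lam mu
  have hX : cvarObj s X lam < cvar s X + ε / 2 := hlam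
  have hY : cvarObj s Y mu < cvar s Y + ε / 2 := hmu
  nlinarith [mul_le_mul_of_nonneg_left hX.le ha, mul_le_mul_of_nonneg_left hY.le hb]

lemma cvar_lip_le (s : ℝ) (hs0 : 0 ≤ s) (hs1 : s ≤ 1) (X Y : L2) :
    cvar s X ≤ cvar s Y + ∫ t, |X t - Y t| ∂unitMeasure := by
  have hC : Integrable (fun t => |X t - Y t|) unitMeasure :=
    ((L2.int X).sub (L2.int Y)).abs
  have key : ∀ lam, cvarObj s X lam ≤ cvarObj s Y lam + ∫ t, |X t - Y t| ∂unitMeasure := by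
    intro lam
    have hpt : ∀ t, max (X t - lam) 0 ≤ max (Y t - lam) 0 + |X t - Y t| := by
      intro t
      have := abs_max_sub_max_le_abs (X t - lam) (Y t - lam) 0
      have h2 : |(X t - lam) - (Y t - lam)| = |X t - Y t| := by ring_nf
      rw [h2] at this
      have := abs_le.mp this
      linarith [this.2]
    have := integral_mono (cvar_int_max X lam) ((cvar_int_max Y lam).add hC) hpt
    simp only [Pi.add_apply] at this
    rw [integral_add (cvar_int_max Y lam) hC] at this
    unfold cvarObj; linarith
  have h1 : ∀ lam, cvar s X - ∫ t, |X t - Y t| ∂unitMeasure ≤ cvarObj s Y lam := by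
    intro lam
    have := cvar_le s hs0 hs1 X lam
    linarith [key lam]
  linarith [le_cvar s Y _ h1]

lemma int_abs_le_dist (X Y : L2) : ∫ t, |X t - Y t| ∂unitMeasure ≤ dist X Y := by
  have hsub : (fun t => ((X : ℝ → ℝ)  - (Y : ℝ → ℝ)) t) =ᵐ[unitMeasure] fun t => X t - Y t :=
    Filter.EventuallyEq.rfl
  have h1 : ∫ t, |X t - Y t| ∂unitMeasure
      = (eLpNorm ((X : ℝ → ℝ) - (Y : ℝ → ℝ)) 1 unitMeasure).toReal := by
    rw [eLpNorm_one_eq_lintegral_enorm]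
    have := integral_norm_eq_lintegral_enorm
      (f := (X : ℝ → ℝ) - (Y : ℝ → ℝ)) (μ := unitMeasure)
      ((Lp.aestronglyMeasurable X).sub (Lp.aestronglyMeasurable Y))
    simp only [Pi.sub_apply, Real.norm_eq_abs] at this ⊢
    rw [← this]
  rw [h1, Lp.dist_def]
  have h2 : eLpNorm ((X : ℝ → ℝ) - (Y : ℝ → ℝ)) 1 unitMeasure
      ≤ eLpNorm ((X : ℝ → ℝ) - (Y : ℝ → ℝ)) 2 unitMeasure :=
    eLpNorm_le_eLpNorm_of_exponent_le (by norm_num)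
      ((Lp.aestronglyMeasurable X).sub (Lp.aestronglyMeasurable Y))
  have h3 : eLpNorm ((X : ℝ → ℝ) - (Y : ℝ → ℝ)) 2 unitMeasure ≠ ⊤ := by
    rw [eLpNorm_congr_ae (Lp.coeFn_sub X Y).symm]
    exact Lp.eLpNorm_ne_top (X - Y)
  exact ENNReal.toReal_mono h3 h2

lemma cvar_lipschitz (s : ℝ) (hs0 : 0 ≤ s) (hs1 : s ≤ 1) :
    LipschitzWith 1 (cvar s) := by
  refine LipschitzWith.of_dist_le_mul fun X Y => ?_
  rw [Real.dist_eq, NNReal.coe_one, one_mul]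
  have habs : ∫ t, |Y t - X t| ∂unitMeasure = ∫ t, |X t - Y t| ∂unitMeasure := by
    congr 1; ext t; rw [abs_sub_comm]
  have h1 := cvar_lip_le s hs0 hs1 X Y
  have h2 := cvar_lip_le s hs0 hs1 Y X
  rw [habs] at h2
  have h3 := int_abs_le_dist X Y
  rw [abs_le]
  constructor <;> linarith

lemma integral_lipschitz : LipschitzWith 1 (fun X : L2 => ∫ t, X t ∂unitMeasure) := by
  refine LipschitzWith.of_dist_le_mul fun X Y => ?_
  rw [Real.dist_eq, NNReal.coe_one, one_mul]
  have h1 : ∫ t, X t ∂unitMeasure - ∫ t, Y t ∂unitMeasure = ∫ t, (X t - Y t) ∂unitMeasure :=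
    (integral_sub (L2.int X) (L2.int Y)).symm
  rw [h1]
  calc |∫ t, (X t - Y t) ∂unitMeasure| = ‖∫ t, (X t - Y t) ∂unitMeasure‖ := rfl
    _ ≤ ∫ t, ‖X t - Y t‖ ∂unitMeasure := norm_integral_le_integral_norm _
    _ = ∫ t, |X t - Y t| ∂unitMeasure := rfl
    _ ≤ dist X Y := int_abs_le_dist X Y

lemma IsUnifPartition.pos {p : ℕ} {I : Fin p → Set ℝ} (hI : IsUnifPartition p I) : 0 < p := by
  by_contra h
  push_neg at h
  interval_cases p
  have := hI.2.2.1
  simp only [Set.iUnion_of_empty] at this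
  have : (1/2 : ℝ) ∈ (∅ : Set ℝ) := this ▸ (by norm_num : (1/2:ℝ) ∈ Set.Ioo (0:ℝ) 1)
  exact this

lemma IsUnifPartition.subset {p : ℕ} {I : Fin p → Set ℝ} (hI : IsUnifPartition p I) (j : Fin p) :
    I j ⊆ Set.Ioo (0:ℝ) 1 :=
  hI.2.2.1 ▸ Set.subset_iUnion I j

lemma IsUnifPartition.unitMeasure_eq {p : ℕ} {I : Fin p → Set ℝ} (hI : IsUnifPartition p I)
    (j : Fin p) : unitMeasure (I j) = 1 / (p : ℝ≥0∞) := by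
  rw [unitMeasure, Measure.restrict_apply (hI.1 j),
    Set.inter_eq_self_of_subset_left (hI.subset j)]
  exact hI.2.2.2 j

lemma integral_rep {p : ℕ} {I : Fin p → Set ℝ} (hI : IsUnifPartition p I)
    {x : Fin p → ℝ} {X : L2} (hrep : RepresentsEmbed I x X) (g : ℝ → ℝ) :
    ∫ t, g (X t) ∂unitMeasure = (1/(p:ℝ)) * ∑ j, g (x j) := by
  have hp := hI.pos
  set S : ℝ → ℝ := fun t => ∑ j, Set.indicator (I j) (fun _ => x j) t with hS
  have hae1 : (fun t => g (X t)) =ᵐ[unitMeasure] fun t => g (S t) := hrep.fun_comp g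
  have hae2 : (fun t => g (S t)) =ᵐ[unitMeasure]
      fun t => ∑ j, Set.indicator (I j) (fun _ => g (x j)) t := by
    have hmem : ∀ᵐ t ∂unitMeasure, t ∈ Set.Ioo (0:ℝ) 1 := by
      rw [unitMeasure]
      exact ae_restrict_mem measurableSet_Ioo
    filter_upwards [hmem] with t ht
    rw [← hI.2.2.1, Set.mem_iUnion] at ht
    obtain ⟨j₀, hj₀⟩ := ht
    have hother : ∀ j : Fin p, j ≠ j₀ → t ∉ I j := by
      intro j hj hmem'
      exact (hI.2.1 hj).ne_of_mem hmem' hj₀ rfl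
    have hSval : S t = x j₀ := by
      show ∑ j, Set.indicator (I j) (fun _ => x j) t = x j₀
      rw [Finset.sum_eq_single j₀]
      · exact Set.indicator_of_mem hj₀ _
      · intro j _ hj
        exact Set.indicator_of_notMem (hother j hj) _
      · intro h
        exact absurd (Finset.mem_univ j₀) h
    have hgval : ∑ j, Set.indicator (I j) (fun _ => g (x j)) t = g (x j₀) := by
      rw [Finset.sum_eq_single j₀]
      · exact Set.indicator_of_mem hj₀ _
      · intro j _ hj
        exact Set.indicator_of_notMem (hother j hj) _
      · intro h
        exact absurd (Finset.mem_univ j₀) h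
    rw [hSval, hgval]
  rw [integral_congr_ae (hae1.trans hae2),
    integral_finset_sum _ (fun j _ => (integrable_const (g (x j))).indicator (hI.1 j))]
  have hval : ∀ j : Fin p, ∫ t, Set.indicator (I j) (fun _ => g (x j)) t ∂unitMeasure
      = (1/(p:ℝ)) * g (x j) := by
    intro j
    rw [integral_indicator_const (g (x j)) (hI.1 j), measureReal_def, hI.unitMeasure_eq j]
    rw [smul_eq_mul]
    congr 1
    rw [ENNReal.toReal_div]
    simp
  rw [Finset.sum_congr rfl fun j _ => hval j, ← Finset.mul_sum]


lemma cvar_rep {p : ℕ} {I : Fin p → Set ℝ} (hI : IsUnifPartition p I)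
    {x : Fin p → ℝ} {X : L2} (hrep : RepresentsEmbed I x X) (m : ℕ) (hm : 1 ≤ m) (hmp : m ≤ p) :
    cvar ((m:ℝ)/(p:ℝ)) X = (1/(p:ℝ)) * ∑ k ∈ Finset.Ico (p - m) p, sortedSeq x k := by
  have hobj : cvarObj ((m:ℝ)/(p:ℝ)) X = fun lam : ℝ =>
      lam * ((m:ℝ)/(p:ℝ)) + (1/(p:ℝ)) * ∑ k ∈ Finset.range p, max (sortedSeq x k - lam) 0 := by
    funext lam
    unfold cvarObj
    rw [integral_rep hI hrep (fun u => max (u - lam) 0),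
      sum_sortedSeq_comp x (fun u => max (u - lam) 0)]
  unfold cvar
  rw [hobj]
  exact (discrete_cvar (sortedSeq x) p m hm hmp (sortedSeq_mono x)).csInf_eq

/-- The Hardy–Littlewood functional `X ↦ ⟨sorted y, "quantile block averages of X"⟩`,
expressed through the CVaR inf-formula. -/
def HLfun (p : ℕ) (y : Fin p → ℝ) (X : L2) : ℝ :=
  sortedSeq y 0 * ((p:ℝ) * ∫ t, X t ∂unitMeasure)
    + ∑ i ∈ Finset.range (p-1), (sortedSeq y (i+1) - sortedSeq y i) *
        ((p:ℝ) * cvar (((p - 1 - i : ℕ) : ℝ) / (p:ℝ)) X)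

lemma HL_s_mem {p i : ℕ} (hi : i ∈ Finset.range (p-1)) :
    0 ≤ ((p - 1 - i : ℕ) : ℝ) / (p:ℝ) ∧ ((p - 1 - i : ℕ) : ℝ) / (p:ℝ) ≤ 1 := by
  have hi' : i < p - 1 := Finset.mem_range.mp hi
  constructor
  · positivity
  · apply div_le_one_of_le₀
    · exact_mod_cast (by omega : p - 1 - i ≤ p)
    · positivity

lemma HLfun_law_inv (p : ℕ) (y : Fin p → ℝ) (X X' : L2) (h : lawOf X = lawOf X') :
    HLfun p y X = HLfun p y X' := by
  unfold HLfun
  rw [integral_law_inv X X' h]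
  congr 1
  refine Finset.sum_congr rfl fun i hi => ?_
  rw [cvar_law_inv _ X X' h]

lemma HLfun_continuous (p : ℕ) (y : Fin p → ℝ) : Continuous (HLfun p y) := by
  unfold HLfun
  apply Continuous.add
  · exact continuous_const.mul (continuous_const.mul integral_lipschitz.continuous)
  · apply continuous_finset_sum
    intro i hi
    exact continuous_const.mul (continuous_const.mul
      ((cvar_lipschitz _ (HL_s_mem hi).1 (HL_s_mem hi).2).continuous))

lemma L2.integral_combo (X Y : L2) (a b : ℝ) :
    ∫ t, (a • X + b • Y : L2) t ∂unitMeasure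
      = a * ∫ t, X t ∂unitMeasure + b * ∫ t, Y t ∂unitMeasure := by
  have hcoe : (fun t => (a • X + b • Y : L2) t) =ᵐ[unitMeasure]
      fun t => a * X t + b * Y t := by
    filter_upwards [Lp.coeFn_add (a • X) (b • Y), Lp.coeFn_smul a X, Lp.coeFn_smul b Y]
      with t h1 h2 h3
    simp only [h1, Pi.add_apply, h2, h3, Pi.smul_apply, smul_eq_mul]
  rw [integral_congr_ae hcoe,
    integral_add ((L2.int X).const_mul a) ((L2.int Y).const_mul b),
    integral_const_mul, integral_const_mul]

lemma HLfun_convex (p : ℕ) (y : Fin p → ℝ) (X Y : L2) (a b : ℝ)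
    (ha : 0 ≤ a) (hb : 0 ≤ b) (hab : a + b = 1) :
    HLfun p y (a • X + b • Y) ≤ a * HLfun p y X + b * HLfun p y Y := by
  unfold HLfun
  have h1 : sortedSeq y 0 * ((p:ℝ) * ∫ t, (a • X + b • Y : L2) t ∂unitMeasure)
      = a * (sortedSeq y 0 * ((p:ℝ) * ∫ t, X t ∂unitMeasure))
        + b * (sortedSeq y 0 * ((p:ℝ) * ∫ t, Y t ∂unitMeasure)) := by
    rw [L2.integral_combo X Y a b]; ring
  have h2 : ∑ i ∈ Finset.range (p-1), (sortedSeq y (i+1) - sortedSeq y i) *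
        ((p:ℝ) * cvar (((p - 1 - i : ℕ) : ℝ) / (p:ℝ)) (a • X + b • Y))
      ≤ ∑ i ∈ Finset.range (p-1),
          (a * ((sortedSeq y (i+1) - sortedSeq y i) *
            ((p:ℝ) * cvar (((p - 1 - i : ℕ) : ℝ) / (p:ℝ)) X))
          + b * ((sortedSeq y (i+1) - sortedSeq y i) *
            ((p:ℝ) * cvar (((p - 1 - i : ℕ) : ℝ) / (p:ℝ)) Y))) := by
    refine Finset.sum_le_sum fun i hi => ?_
    have hgap : 0 ≤ sortedSeq y (i+1) - sortedSeq y i := by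
      have hi' : i < p - 1 := Finset.mem_range.mp hi
      have := sortedSeq_mono y i (i+1) (Nat.le_succ i) (by omega)
      linarith
    have hc := cvar_convex _ (HL_s_mem hi).1 (HL_s_mem hi).2 X Y a b ha hb hab
    have hpnn : (0:ℝ) ≤ p := Nat.cast_nonneg p
    nlinarith [mul_le_mul_of_nonneg_left hc hpnn,
      mul_le_mul_of_nonneg_left (mul_le_mul_of_nonneg_left hc hpnn) hgap]
  rw [Finset.sum_add_distrib, ← Finset.mul_sum, ← Finset.mul_sum] at h2
  linarith

lemma HLfun_rep {p : ℕ} {I : Fin p → Set ℝ} (hI : IsUnifPartition p I)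
    {x : Fin p → ℝ} {X : L2} (hrep : RepresentsEmbed I x X) (y : Fin p → ℝ) :
    HLfun p y X = ∑ k ∈ Finset.range p, sortedSeq x k * sortedSeq y k := by
  have hp := hI.pos
  obtain ⟨n, rfl⟩ : ∃ n, p = n + 1 := ⟨p - 1, (Nat.succ_pred_eq_of_pos hp).symm⟩
  rw [abel_identity (sortedSeq x) (sortedSeq y) n]
  unfold HLfun
  have hpR : (0:ℝ) < (n+1:ℕ) := by positivity
  have ht1 : ((n+1:ℕ):ℝ) * ∫ t, X t ∂unitMeasure = ∑ k ∈ Finset.range (n+1), sortedSeq x k := by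
    rw [integral_rep hI hrep (fun u => u), ← sum_sortedSeq_comp x (fun u => u)]
    field_simp
  have hn1 : n + 1 - 1 = n := rfl
  rw [hn1, ht1]
  have hsum : ∑ i ∈ Finset.range n, (sortedSeq y (i+1) - sortedSeq y i) *
        (((n+1:ℕ):ℝ) * cvar (((n - i : ℕ) : ℝ) / ((n+1:ℕ):ℝ)) X)
      = ∑ i ∈ Finset.range n, (sortedSeq y (i+1) - sortedSeq y i) *
        ∑ k ∈ Finset.Ico (i+1) (n+1), sortedSeq x k := by
    refine Finset.sum_congr rfl fun i hi => ?_
    have hi' : i < n := Finset.mem_range.mp hi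
    have hm1 : 1 ≤ n - i := by omega
    have hm2 : n - i ≤ n + 1 := by omega
    have hrw2 : n + 1 - (n - i) = i + 1 := by omega
    rw [cvar_rep hI hrep (n - i) hm1 hm2, hrw2]
    have he : ((n+1:ℕ):ℝ) * ((1/((n+1:ℕ):ℝ)) * ∑ k ∈ Finset.Ico (i+1) (n+1), sortedSeq x k)
        = ∑ k ∈ Finset.Ico (i+1) (n+1), sortedSeq x k := by
      field_simp
    rw [he]
  rw [hsum]

end AuxProof

noncomputable section FinalAux

noncomputable section Fenchel
variable {p : ℕ}

def dotp {p : ℕ} (x y : Fin p → ℝ) : ℝ := ∑ j, x j * y j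

def Minorant (fp : (Fin p → ℝ) → EReal) (y : Fin p → ℝ) (c : ℝ) : Prop :=
  ∀ z, ((dotp z y + c : ℝ) : EReal) ≤ fp z

def Epi (fp : (Fin p → ℝ) → EReal) : Set ((Fin p → ℝ) × ℝ) :=
  {q | fp q.1 ≤ (q.2 : EReal)}

lemma epi_closed {fp : (Fin p → ℝ) → EReal} (hlsc : LowerSemicontinuous fp) :
    IsClosed (Epi fp) := by
  rw [← isOpen_compl_iff, isOpen_iff_mem_nhds]
  rintro ⟨x, t⟩ hq
  simp only [Set.mem_compl_iff, Epi, Set.mem_setOf_eq, not_le] at hq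
  obtain ⟨r, hr1, hr2⟩ := EReal.lt_iff_exists_real_btwn.mp hq
  have ht : t < r := by exact_mod_cast hr1
  have hU : ∀ᶠ x' in nhds x, (r : EReal) < fp x' := hlsc x _ hr2
  have hmem : {x' : Fin p → ℝ | (r : EReal) < fp x'} ×ˢ Set.Iio r
      ∈ nhds ((x, t) : (Fin p → ℝ) × ℝ) := by
    rw [nhds_prod_eq]
    exact Filter.prod_mem_prod hU (Iio_mem_nhds ht)
  refine Filter.mem_of_superset hmem ?_
  rintro ⟨x', t'⟩ ⟨hx', ht'⟩
  simp only [Set.mem_compl_iff, Epi, Set.mem_setOf_eq, not_le]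
  calc ((t' : EReal)) < (r : EReal) := by exact_mod_cast ht'
    _ < fp x' := hx'

lemma epi_convex {fp : (Fin p → ℝ) → EReal} (hconv : ConvexE fp) :
    Convex ℝ (Epi fp) := by
  rintro ⟨x, s⟩ hx ⟨z, t⟩ hz a b ha hb hab
  simp only [Epi, Set.mem_setOf_eq] at hx hz ⊢
  have h := hconv x z a b ha hb hab
  have hxx : (a : EReal) * fp x ≤ (a : EReal) * (s : EReal) :=
    mul_le_mul_of_nonneg_left hx (by exact_mod_cast ha)
  have hzz : (b : EReal) * fp z ≤ (b : EReal) * (t : EReal) :=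
    mul_le_mul_of_nonneg_left hz (by exact_mod_cast hb)
  have heq : (a : EReal) * (s : EReal) + (b : EReal) * (t : EReal)
      = ((a * s + b * t : ℝ) : EReal) := by
    rw [← EReal.coe_mul, ← EReal.coe_mul, ← EReal.coe_add]
  have hgoal : fp (a • x + b • z) ≤ ((a * s + b * t : ℝ) : EReal) :=
    le_trans h (heq ▸ add_le_add hxx hzz)
  show fp (a • x + b • z) ≤ ((a • s + b • t : ℝ) : EReal)
  simpa [smul_eq_mul] using hgoal

lemma clm_decomp (φ : ((Fin p → ℝ) × ℝ) →L[ℝ] ℝ) (x : Fin p → ℝ) (t : ℝ) :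
    φ (x, t) = dotp x (fun j => φ ((fun k => if j = k then (1:ℝ) else 0), 0))
      + t * φ (0, 1) := by
  have hxt : ((x, t) : (Fin p → ℝ) × ℝ)
      = (∑ j, x j • (((fun k => if j = k then (1:ℝ) else 0) : Fin p → ℝ), (0:ℝ)))
        + t • ((0 : Fin p → ℝ), (1:ℝ)) := by
    refine Prod.ext ?_ ?_
    · simp only [Prod.fst_add, Prod.fst_sum, Prod.smul_fst, Prod.smul_snd]
      rw [← pi_eq_sum_univ x]
      simp
    · simp only [Prod.snd_add, Prod.snd_sum, Prod.smul_snd]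
      simp
  rw [hxt, map_add, map_sum, _root_.map_smul]
  simp only [smul_eq_mul, dotp]
  congr 1
  refine Finset.sum_congr rfl fun j _ => ?_
  rw [_root_.map_smul, smul_eq_mul]

lemma exists_minorant {fp : (Fin p → ℝ) → EReal} (hlsc : LowerSemicontinuous fp)
    (hbot : ∀ x, fp x ≠ ⊥) (hproper : ∃ x, fp x ≠ ⊤) (hconv : ConvexE fp) :
    ∃ y c, Minorant fp y c := by
  obtain ⟨x₀, hx₀⟩ := hproper
  set r₀ := (fp x₀).toReal with hr₀
  have hfx₀ : fp x₀ = (r₀ : EReal) := (EReal.coe_toReal hx₀ (hbot x₀)).symm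
  have hnot : ((x₀, r₀ - 1) : (Fin p → ℝ) × ℝ) ∉ Epi fp := by
    simp only [Epi, Set.mem_setOf_eq, hfx₀, EReal.coe_le_coe_iff]
    push_neg
    linarith
  obtain ⟨φ, u, hu1, hu2⟩ := geometric_hahn_banach_point_closed
    (epi_convex hconv) (epi_closed hlsc) hnot
  set aa : Fin p → ℝ := fun j => φ ((fun k => if j = k then (1:ℝ) else 0), 0) with haa
  set β : ℝ := φ (0, 1) with hβdef
  have hdec : ∀ x t, φ (x, t) = dotp x aa + t * β := fun x t => clm_decomp φ x t
  have hmem : ((x₀, r₀) : (Fin p → ℝ) × ℝ) ∈ Epi fp := by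
    simp [Epi, hfx₀]
  have h1 : u < dotp x₀ aa + r₀ * β := by
    have := hu2 _ hmem
    rwa [hdec] at this
  have h2 : dotp x₀ aa + (r₀ - 1) * β < u := by
    have := hu1
    rwa [hdec] at this
  have hβ : 0 < β := by nlinarith
  refine ⟨fun j => -(aa j) / β, u / β, ?_⟩
  intro z
  by_cases hz : fp z = ⊤
  · rw [hz]; exact le_top
  · have hfz : fp z = ((fp z).toReal : EReal) := (EReal.coe_toReal hz (hbot z)).symm
    set rz := (fp z).toReal
    have hmemz : ((z, rz) : (Fin p → ℝ) × ℝ) ∈ Epi fp := by simp [Epi, hfz]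
    have h3 : u < dotp z aa + rz * β := by
      have := hu2 _ hmemz
      rwa [hdec] at this
    rw [hfz, EReal.coe_le_coe_iff]
    have hdz : dotp z (fun j => -(aa j) / β) = -(dotp z aa) / β := by
      unfold dotp
      have h4 : ∀ j : Fin p, z j * (-(aa j) / β) = z j * aa j * (-β⁻¹) := fun j => by
        rw [div_eq_mul_inv]; ring
      rw [Finset.sum_congr rfl fun j _ => h4 j, ← Finset.sum_mul, div_eq_mul_inv]
      ring
    rw [hdz, ← add_div, div_le_iff₀ hβ]
    linarith

lemma exists_minorant_gt {fp : (Fin p → ℝ) → EReal} (hlsc : LowerSemicontinuous fp)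
    (hbot : ∀ x, fp x ≠ ⊥) (hproper : ∃ x, fp x ≠ ⊤) (hconv : ConvexE fp)
    (x₀ : Fin p → ℝ) (r : ℝ) (hr : (r : EReal) < fp x₀) :
    ∃ y c, Minorant fp y c ∧ r < dotp x₀ y + c := by
  have hnot : ((x₀, r) : (Fin p → ℝ) × ℝ) ∉ Epi fp := by
    simp only [Epi, Set.mem_setOf_eq]
    exact not_le.mpr hr
  obtain ⟨φ, u, hu1, hu2⟩ := geometric_hahn_banach_point_closed
    (epi_convex hconv) (epi_closed hlsc) hnot
  set aa : Fin p → ℝ := fun j => φ ((fun k => if j = k then (1:ℝ) else 0), 0) with haa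
  set β : ℝ := φ (0, 1) with hβdef
  have hdec : ∀ x t, φ (x, t) = dotp x aa + t * β := fun x t => clm_decomp φ x t
  have hx₀r : dotp x₀ aa + r * β < u := by
    have := hu1
    rwa [hdec] at this
  have hdom : ∀ z, fp z ≠ ⊤ → ∀ t : ℝ, (fp z).toReal ≤ t → u < dotp z aa + t * β := by
    intro z hz t ht
    set rz := (fp z).toReal with hrz
    have hfz : fp z = (rz : EReal) := (EReal.coe_toReal hz (hbot z)).symm
    have hmemz : ((z, t) : (Fin p → ℝ) × ℝ) ∈ Epi fp := by
      show fp z ≤ (t : EReal)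
      rw [hfz]
      exact_mod_cast ht
    have := hu2 _ hmemz
    rwa [hdec] at this
  have hβ0 : 0 ≤ β := by
    by_contra hneg
    push_neg at hneg
    obtain ⟨z₀, hz₀⟩ := hproper
    set t := max (fp z₀).toReal ((u - dotp z₀ aa) / β) with htdef
    have h5 := hdom z₀ hz₀ t (le_max_left _ _)
    have h6 : t * β ≤ ((u - dotp z₀ aa) / β) * β :=
      mul_le_mul_of_nonpos_right (le_max_right _ _) hneg.le
    rw [div_mul_cancel₀ _ (ne_of_lt hneg)] at h6
    linarith
  by_cases hβ : 0 < β
  · refine ⟨fun j => -(aa j) / β, u / β, ?_, ?_⟩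
    · intro z
      by_cases hz : fp z = ⊤
      · rw [hz]; exact le_top
      · have hfz : fp z = ((fp z).toReal : EReal) := (EReal.coe_toReal hz (hbot z)).symm
        have h3 := hdom z hz (fp z).toReal le_rfl
        rw [hfz, EReal.coe_le_coe_iff]
        have hdz : dotp z (fun j => -(aa j) / β) = -(dotp z aa) / β := by
          unfold dotp
          have h4 : ∀ j : Fin p, z j * (-(aa j) / β) = z j * aa j * (-β⁻¹) := fun j => by
            rw [div_eq_mul_inv]; ring
          rw [Finset.sum_congr rfl fun j _ => h4 j, ← Finset.sum_mul, div_eq_mul_inv]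
          ring
        rw [hdz, ← add_div, div_le_iff₀ hβ]
        linarith
    · have hdz : dotp x₀ (fun j => -(aa j) / β) = -(dotp x₀ aa) / β := by
        unfold dotp
        have h4 : ∀ j : Fin p, x₀ j * (-(aa j) / β) = x₀ j * aa j * (-β⁻¹) := fun j => by
          rw [div_eq_mul_inv]; ring
        rw [Finset.sum_congr rfl fun j _ => h4 j, ← Finset.sum_mul, div_eq_mul_inv]
        ring
      rw [hdz, ← add_div, lt_div_iff₀ hβ]
      linarith
  · have hβz : β = 0 := le_antisymm (not_lt.mp hβ) hβ0
    obtain ⟨y₀, c₀, hy₀⟩ := exists_minorant hlsc hbot hproper hconv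
    have hx₀u : dotp x₀ aa < u := by
      have := hx₀r
      rw [hβz] at this
      linarith
    have hdomu : ∀ z, fp z ≠ ⊤ → u < dotp z aa := by
      intro z hz
      have := hdom z hz (fp z).toReal le_rfl
      rw [hβz] at this
      linarith
    set D := u - dotp x₀ aa with hD
    have hDpos : 0 < D := by simp [hD]; linarith
    set T := max 0 ((r - (dotp x₀ y₀ + c₀) + 1) / D) with hT
    have hT0 : 0 ≤ T := le_max_left _ _
    refine ⟨fun j => y₀ j - T * aa j, c₀ + T * u, ?_, ?_⟩
    · intro z
      by_cases hz : fp z = ⊤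
      · rw [hz]; exact le_top
      · have hfz : fp z = ((fp z).toReal : EReal) := (EReal.coe_toReal hz (hbot z)).symm
        rw [hfz, EReal.coe_le_coe_iff]
        have hy₀z : dotp z y₀ + c₀ ≤ (fp z).toReal := by
          have := hy₀ z
          rw [hfz] at this
          exact_mod_cast this
        have hdz : dotp z (fun j => y₀ j - T * aa j) = dotp z y₀ - T * dotp z aa := by
          unfold dotp
          rw [Finset.mul_sum, ← Finset.sum_sub_distrib]
          refine Finset.sum_congr rfl fun j _ => by ring
        rw [hdz]
        have := hdomu z hz
        nlinarith
    · have hdz : dotp x₀ (fun j => y₀ j - T * aa j) = dotp x₀ y₀ - T * dotp x₀ aa := by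
        unfold dotp
        rw [Finset.mul_sum, ← Finset.sum_sub_distrib]
        refine Finset.sum_congr rfl fun j _ => by ring
      rw [hdz]
      have hTD : r - (dotp x₀ y₀ + c₀) + 1 ≤ T * D := by
        rcases le_or_gt (r - (dotp x₀ y₀ + c₀) + 1) 0 with h | h
        · exact le_trans h (mul_nonneg hT0 hDpos.le)
        · have : (r - (dotp x₀ y₀ + c₀) + 1) / D ≤ T := le_max_right _ _
          calc r - (dotp x₀ y₀ + c₀) + 1 = ((r - (dotp x₀ y₀ + c₀) + 1) / D) * D := by
                field_simp
            _ ≤ T * D := mul_le_mul_of_nonneg_right this hDpos.le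
      simp only [hD] at hTD
      nlinarith
end Fenchel


lemma minorant_perm {p : ℕ} {fp : (Fin p → ℝ) → EReal} (hsymm : SymmPi fp)
    {y : Fin p → ℝ} {c : ℝ} (h : Minorant fp y c) (ρ : Equiv.Perm (Fin p)) :
    Minorant fp (y ∘ ρ) c := by
  intro z
  have hdot : dotp z (y ∘ ρ) = dotp (z ∘ ρ.symm) y := by
    unfold dotp
    rw [← Equiv.sum_comp ρ (fun i => (z ∘ ρ.symm) i * y i)]
    refine Finset.sum_congr rfl fun j _ => ?_
    simp [Function.comp]
  calc ((dotp z (y ∘ ρ) + c : ℝ) : EReal) = ((dotp (z ∘ ρ.symm) y + c : ℝ) : EReal) := by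
        rw [hdot]
    _ ≤ fp (z ∘ ρ.symm) := h (z ∘ ρ.symm)
    _ = fp z := hsymm ρ.symm z

def stdPart (p : ℕ) : Fin p → Set ℝ :=
  fun j => Set.Ioo (0:ℝ) 1 ∩ Set.Ico (((j:ℕ):ℝ)/p) ((((j:ℕ):ℝ)+1)/p)

lemma stdPart_isUnifPartition (p : ℕ) (hp : 1 ≤ p) : IsUnifPartition p (stdPart p) := by
  have hpR : (0:ℝ) < p := by exact_mod_cast hp
  refine ⟨fun j => measurableSet_Ioo.inter measurableSet_Ico, ?_, ?_, ?_⟩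
  · intro j k hjk
    have hd : Disjoint (Set.Ico (((j:ℕ):ℝ)/p) ((((j:ℕ):ℝ)+1)/p))
        (Set.Ico (((k:ℕ):ℝ)/p) ((((k:ℕ):ℝ)+1)/p)) := by
      rw [Set.Ico_disjoint_Ico]
      have hne : (j:ℕ) ≠ (k:ℕ) := fun h => hjk (Fin.ext h)
      rcases hne.lt_or_gt with h | h
      · have hc : ((j:ℕ):ℝ) + 1 ≤ ((k:ℕ):ℝ) := by exact_mod_cast h
        calc min ((((j:ℕ):ℝ)+1)/p) ((((k:ℕ):ℝ)+1)/p) ≤ (((j:ℕ):ℝ)+1)/p := min_le_left _ _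
          _ ≤ ((k:ℕ):ℝ)/p := by gcongr
          _ ≤ max (((j:ℕ):ℝ)/p) (((k:ℕ):ℝ)/p) := le_max_right _ _
      · have hc : ((k:ℕ):ℝ) + 1 ≤ ((j:ℕ):ℝ) := by exact_mod_cast h
        calc min ((((j:ℕ):ℝ)+1)/p) ((((k:ℕ):ℝ)+1)/p) ≤ (((k:ℕ):ℝ)+1)/p := min_le_right _ _
          _ ≤ ((j:ℕ):ℝ)/p := by gcongr
          _ ≤ max (((j:ℕ):ℝ)/p) (((k:ℕ):ℝ)/p) := le_max_left _ _
    exact hd.mono Set.inter_subset_right Set.inter_subset_right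
  · apply Set.eq_of_subset_of_subset
    · exact Set.iUnion_subset fun j => Set.inter_subset_left
    · intro t ht
      have ht0 : 0 < t := ht.1
      have ht1 : t < 1 := ht.2
      have htp : 0 ≤ t * p := by positivity
      have hlt : ⌊t * (p:ℝ)⌋₊ < p := by
        rw [Nat.floor_lt htp]
        calc t * p < 1 * p := by nlinarith
          _ = p := one_mul _
      refine Set.mem_iUnion.mpr ⟨⟨⌊t * (p:ℝ)⌋₊, hlt⟩, ht, ?_, ?_⟩
      · show ((⌊t * (p:ℝ)⌋₊ : ℝ))/p ≤ t
        rw [div_le_iff₀ hpR]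
        exact Nat.floor_le htp
      · show t < ((⌊t * (p:ℝ)⌋₊ : ℝ) + 1)/p
        rw [lt_div_iff₀ hpR]
        exact Nat.lt_floor_add_one (t * p)
  · intro j
    have hjp : ((j:ℕ):ℝ) + 1 ≤ p := by exact_mod_cast j.2
    have hval : volume (stdPart p j) = ENNReal.ofReal (1/(p:ℝ)) := by
      rcases Nat.eq_zero_or_pos (j:ℕ) with h0 | hpos
      · have he : stdPart p j = Set.Ioo (0:ℝ) (1/p) := by
          unfold stdPart
          rw [h0]
          push_cast
          rw [zero_div, zero_add]
          ext t
          simp only [Set.mem_inter_iff, Set.mem_Ioo, Set.mem_Ico]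
          constructor
          · rintro ⟨⟨h1, h2⟩, h3, h4⟩
            exact ⟨h1, h4⟩
          · rintro ⟨h1, h2⟩
            have hle : 1/(p:ℝ) ≤ 1 := by
              rw [div_le_one hpR]; exact_mod_cast hp
            exact ⟨⟨h1, lt_of_lt_of_le h2 hle⟩, h1.le, h2⟩
        rw [he, Real.volume_Ioo]
        norm_num
      · have hsub : Set.Ico (((j:ℕ):ℝ)/p) ((((j:ℕ):ℝ)+1)/p) ⊆ Set.Ioo (0:ℝ) 1 := by
          rintro t ⟨h1, h2⟩
          constructor
          · have : 0 < ((j:ℕ):ℝ)/p := by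
              apply div_pos _ hpR
              exact_mod_cast hpos
            linarith
          · have h3 : (((j:ℕ):ℝ)+1)/p ≤ 1 := by
              rw [div_le_one hpR]; exact hjp
            linarith
        have he : stdPart p j = Set.Ico (((j:ℕ):ℝ)/p) ((((j:ℕ):ℝ)+1)/p) :=
          Set.inter_eq_self_of_subset_right hsub
        rw [he, Real.volume_Ico]
        congr 1
        field_simp
        ring
    rw [hval, ENNReal.ofReal_div_of_pos hpR, ENNReal.ofReal_one]
    congr 1
    exact ENNReal.ofReal_natCast p

lemma exists_rep {p : ℕ} {I : Fin p → Set ℝ} (hI0 : ∀ j, MeasurableSet (I j))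
    (x : Fin p → ℝ) : ∃ X : L2, RepresentsEmbed I x X := by
  have hmem : MemLp (fun t => ∑ j, Set.indicator (I j) (fun _ => x j) t) 2 unitMeasure := by
    apply memLp_finset_sum
    intro j _
    exact memLp_indicator_const 2 (hI0 j) (x j) (Or.inr (measure_ne_top _ _))
  exact ⟨hmem.toLp _, hmem.coeFn_toLp⟩
end FinalAux


/-- Proposition: every lsc, proper, symmetric, convex penalty on `ℝ^p`
admits an `L2` embedding. -/
theorem exists_l2_embedding (p : ℕ) (hp : 1 ≤ p)
    (fp : (Fin p → ℝ) → EReal)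
    (hlsc : LowerSemicontinuous fp) (hbot : ∀ x, fp x ≠ ⊥) (hproper : ∃ x, fp x ≠ ⊤)
    (hsymm : SymmPi fp) (hconv : ConvexE fp) :
    ∃ f : L2 → EReal,
      SymmL2 f ∧ LowerSemicontinuous f ∧ (∀ X, f X ≠ ⊥) ∧ (∃ X, f X ≠ ⊤) ∧ ConvexE f ∧
      IsL2Embedding fp f := by
  classical
  have hp0 : (0:ℝ) < p := by exact_mod_cast hp
  obtain ⟨y₀, c₀, hy₀⟩ := exists_minorant hlsc hbot hproper hconv
  set A : Set ((Fin p → ℝ) × ℝ) := {yc | Minorant fp yc.1 yc.2} with hA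
  haveI hAne : Nonempty A := ⟨⟨(y₀, c₀), hy₀⟩⟩
  set f : L2 → EReal := fun X =>
    ⨆ i : A, (((HLfun p i.1.1 X + i.1.2) / (p:ℝ) : ℝ) : EReal) with hf
  have hcoep : ((p:ℝ) : EReal) = (p : EReal) := EReal.coe_coe_eq_natCast p
  have hpE0 : (0:EReal) ≤ (p:EReal) := by
    rw [← hcoep]; exact EReal.coe_nonneg.mpr hp0.le
  have hkey : ∀ (I : Fin p → Set ℝ), IsUnifPartition p I →
      ∀ (x : Fin p → ℝ) (X : L2), RepresentsEmbed I x X → fp x = (p:EReal) * f X := by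
    intro I hI x X hrep
    have hHL : ∀ y : Fin p → ℝ, HLfun p y X
        = ∑ k ∈ Finset.range p, sortedSeq x k * sortedSeq y k := fun y => HLfun_rep hI hrep y
    apply le_antisymm
    · by_contra hcon
      push_neg at hcon
      obtain ⟨r, hr1, hr2⟩ := EReal.lt_iff_exists_real_btwn.mp hcon
      obtain ⟨y, c, hyc, hgt⟩ := exists_minorant_gt hlsc hbot hproper hconv x r hr2
      have h1 : dotp x y + c ≤ HLfun p y X + c := by
        rw [hHL y]
        have h1' := inner_le_sorted x y
        unfold dotp
        linarith
      have h2 : (((HLfun p y X + c)/(p:ℝ) : ℝ) : EReal) ≤ f X :=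
        le_iSup (fun i : A => (((HLfun p i.1.1 X + i.1.2) / (p:ℝ) : ℝ) : EReal))
          ⟨(y, c), hyc⟩
      have h3 : (p:EReal) * (((HLfun p y X + c)/(p:ℝ) : ℝ) : EReal) ≤ (p:EReal) * f X :=
        mul_le_mul_of_nonneg_left h2 hpE0
      have h4 : (p:EReal) * (((HLfun p y X + c)/(p:ℝ) : ℝ) : EReal)
          = ((HLfun p y X + c : ℝ) : EReal) := by
        rw [← hcoep, ← EReal.coe_mul]
        congr 1
        field_simp
      have h5 : (r : EReal) < ((HLfun p y X + c : ℝ) : EReal) :=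
        EReal.coe_lt_coe_iff.mpr (lt_of_lt_of_le hgt h1)
      have h6 := lt_of_lt_of_le h5 (h4 ▸ h3)
      exact absurd hr1 (not_lt.mpr h6.le)
    · by_cases htop : fp x = ⊤
      · rw [htop]; exact le_top
      · set s := (fp x).toReal with hs
        have hfx : fp x = (s : EReal) := (EReal.coe_toReal htop (hbot x)).symm
        have hfle : f X ≤ ((s/(p:ℝ) : ℝ) : EReal) := by
          apply iSup_le
          rintro ⟨⟨y, c⟩, hyc⟩
          simp only
          rw [EReal.coe_le_coe_iff]
          have hle : HLfun p y X + c ≤ s := by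
            obtain ⟨ρ, hρ⟩ := sorted_eq_perm x y
            have hycρ : Minorant fp (y ∘ ρ) c := minorant_perm hsymm hyc ρ
            have h7 := hycρ x
            rw [hfx, EReal.coe_le_coe_iff] at h7
            have h8 : dotp x (y ∘ ρ) = ∑ j : Fin p, x j * y (ρ j) := rfl
            rw [h8] at h7
            rw [hHL y, hρ]
            linarith
          gcongr
        calc (p:EReal) * f X ≤ (p:EReal) * ((s/(p:ℝ) : ℝ) : EReal) :=
              mul_le_mul_of_nonneg_left hfle hpE0
          _ = (s : EReal) := by
              rw [← hcoep, ← EReal.coe_mul]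
              congr 1
              field_simp
          _ = fp x := hfx.symm
  refine ⟨f, ?_, ?_, ?_, ?_, ?_, hkey⟩
  · intro X X' hlaw
    exact iSup_congr fun i => by rw [HLfun_law_inv p i.1.1 X X' hlaw]
  · intro X yv hyv
    replace hyv := lt_iSup_iff.mp hyv
    obtain ⟨i, hi⟩ := hyv
    have hconti : Continuous fun X' : L2 =>
        (((HLfun p i.1.1 X' + i.1.2)/(p:ℝ) : ℝ) : EReal) :=
      continuous_coe_real_ereal.comp
        (((HLfun_continuous p i.1.1).add continuous_const).div_const _)
    have hev : ∀ᶠ X' in nhds X, yv < (((HLfun p i.1.1 X' + i.1.2)/(p:ℝ) : ℝ) : EReal) :=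
      hconti.lowerSemicontinuous X _ hi
    filter_upwards [hev] with X' hX'
    have hle : (((HLfun p i.1.1 X' + i.1.2)/(p:ℝ) : ℝ) : EReal) ≤ f X' :=
      le_iSup (fun i : A => (((HLfun p i.1.1 X' + i.1.2)/(p:ℝ) : ℝ) : EReal)) i
    exact lt_of_lt_of_le hX' hle
  · intro X hbotX
    have hle := le_iSup (fun i : A => (((HLfun p i.1.1 X + i.1.2)/(p:ℝ) : ℝ) : EReal))
      (Classical.arbitrary A)
    rw [show (⨆ i : A, (((HLfun p i.1.1 X + i.1.2)/(p:ℝ) : ℝ) : EReal)) = f X from rfl,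
      hbotX, le_bot_iff] at hle
    exact EReal.coe_ne_bot _ hle
  · obtain ⟨x₀, hx₀⟩ := hproper
    obtain ⟨X₀, hX₀⟩ := exists_rep (stdPart_isUnifPartition p hp).1 x₀
    refine ⟨X₀, fun hfX => ?_⟩
    have h9 := hkey (stdPart p) (stdPart_isUnifPartition p hp) x₀ X₀ hX₀
    rw [hfX] at h9
    have hptop : (p:EReal) * ⊤ = ⊤ := by
      rw [← hcoep]
      exact EReal.coe_mul_top_of_pos hp0
    rw [hptop] at h9
    exact hx₀ h9
  · intro X Y a b ha hb hab
    apply iSup_le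
    rintro ⟨⟨y, c⟩, hyc⟩
    simp only
    have hcvx := HLfun_convex p y X Y a b ha hb hab
    have hreal : (HLfun p y (a • X + b • Y) + c)/(p:ℝ)
        ≤ a * ((HLfun p y X + c)/(p:ℝ)) + b * ((HLfun p y Y + c)/(p:ℝ)) := by
      have h6 : HLfun p y (a • X + b • Y) + c
          ≤ a * (HLfun p y X + c) + b * (HLfun p y Y + c) := by
        have hexp : a * (HLfun p y X + c) + b * (HLfun p y Y + c)
            = a * HLfun p y X + b * HLfun p y Y + (a + b) * c := by ring
        rw [hexp, hab]
        linarith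
      calc (HLfun p y (a • X + b • Y) + c)/(p:ℝ)
          ≤ (a * (HLfun p y X + c) + b * (HLfun p y Y + c))/(p:ℝ) := by gcongr
        _ = a * ((HLfun p y X + c)/(p:ℝ)) + b * ((HLfun p y Y + c)/(p:ℝ)) := by ring
    calc (((HLfun p y (a • X + b • Y) + c)/(p:ℝ) : ℝ) : EReal)
        ≤ ((a * ((HLfun p y X + c)/(p:ℝ)) + b * ((HLfun p y Y + c)/(p:ℝ)) : ℝ) : EReal) :=
          EReal.coe_le_coe_iff.mpr hreal
      _ = (a : EReal) * (((HLfun p y X + c)/(p:ℝ) : ℝ) : EReal)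
            + (b : EReal) * (((HLfun p y Y + c)/(p:ℝ) : ℝ) : EReal) := by
          rw [EReal.coe_add, EReal.coe_mul, EReal.coe_mul]
      _ ≤ (a : EReal) * f X + (b : EReal) * f Y := by
          have hlx : (((HLfun p y X + c)/(p:ℝ) : ℝ) : EReal) ≤ f X :=
            le_iSup (fun i : A => (((HLfun p i.1.1 X + i.1.2)/(p:ℝ) : ℝ) : EReal)) ⟨(y, c), hyc⟩
          have hly : (((HLfun p y Y + c)/(p:ℝ) : ℝ) : EReal) ≤ f Y :=
            le_iSup (fun i : A => (((HLfun p i.1.1 Y + i.1.2)/(p:ℝ) : ℝ) : EReal)) ⟨(y, c), hyc⟩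
          exact add_le_add
            (mul_le_mul_of_nonneg_left hlx (EReal.coe_nonneg.mpr ha))
            (mul_le_mul_of_nonneg_left hly (EReal.coe_nonneg.mpr hb))

end
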